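/- Let E be an m-dimensional linear subspace of ℝ^n (n = m + k), let v_1,…,v_m ∈ E, and let 0 < L ≤ 1. If |v_j − (e_j, 0)| ≤ L/(3√m) for all j, then E = span{(e_1,a_1),…,(e_m,a_m)} for some a_1,…,a_m ∈ ℝ^k, and moreover (Σ_{j=1}^m |a_j|²)^{1/2} ≤ L. -/

import Mathlib

/-- The Euclidean (L²) product space ℝ^m × ℝ^k. -/
noncomputable abbrev ProdSp (m k : ℕ) :=
  WithLp 2 (EuclideanSpace ℝ (Fin m) × EuclideanSpace ℝ (Fin k))

/-- The point (x, a) ∈ ℝ^m × ℝ^k. -/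
noncomputable def mk2 {m k : ℕ} (x : EuclideanSpace ℝ (Fin m)) (a : EuclideanSpace ℝ (Fin k)) :
    ProdSp m k := (WithLp.equiv 2 _).symm (x, a)

section FrobAux
attribute [local instance] Matrix.frobeniusSeminormedAddCommGroup
  Matrix.frobeniusNormedAddCommGroup Matrix.frobeniusNormedSpace Matrix.frobeniusNormedRing

lemma frob_eq {m n : ℕ} (A : Matrix (Fin m) (Fin n) ℝ) :
    ‖A‖ = Real.sqrt (∑ i, ∑ j, (A i j) ^ 2) := by
  rw [Matrix.frobenius_norm_def, Real.sqrt_eq_rpow]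
  congr 1
  refine Finset.sum_congr rfl fun i _ => Finset.sum_congr rfl fun j _ => ?_
  rw [show ((2:ℝ)) = ((2:ℕ):ℝ) by norm_num, Real.rpow_natCast, Real.norm_eq_abs, sq_abs]

lemma frob_le {m n : ℕ} (A : Matrix (Fin m) (Fin n) ℝ) {c : ℝ} (hc : 0 ≤ c)
    (h : ∑ i, ∑ j, (A i j) ^ 2 ≤ c ^ 2) : ‖A‖ ≤ c := by
  rw [frob_eq]
  calc Real.sqrt (∑ i, ∑ j, (A i j) ^ 2) ≤ Real.sqrt (c ^ 2) := Real.sqrt_le_sqrt h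
  _ = c := Real.sqrt_sq hc

/-- First coordinate projection as a linear map, with cheap application. -/
def fstL (m k : ℕ) : ProdSp m k →ₗ[ℝ] EuclideanSpace ℝ (Fin m) where
  toFun z := z.ofLp.1
  map_add' _ _ := rfl
  map_smul' _ _ := rfl

/-- Second coordinate projection as a linear map, with cheap application. -/
def sndL (m k : ℕ) : ProdSp m k →ₗ[ℝ] EuclideanSpace ℝ (Fin k) where
  toFun z := z.ofLp.2
  map_add' _ _ := rfl
  map_smul' _ _ := rfl

/-- Evaluation at a point as a linear map, with cheap application. -/
def evalL (n : ℕ) (i : Fin n) : EuclideanSpace ℝ (Fin n) →ₗ[ℝ] ℝ where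
  toFun z := z i
  map_add' _ _ := rfl
  map_smul' _ _ := rfl

/-- Lemma 3.1: if an m-dimensional subspace E of ℝ^m × ℝ^k contains points v_j with
|v_j − (e_j, 0)| ≤ L/(3√m), 0 < L ≤ 1, then E = span{(e_1,a_1),…,(e_m,a_m)} with
(Σ_j |a_j|²)^(1/2) ≤ L. -/
theorem stmt1 {m k : ℕ} (E : Submodule ℝ (ProdSp m k))
    (hE : Module.finrank ℝ E = m)
    (v : Fin m → ProdSp m k) (hv : ∀ j, v j ∈ E)
    (L : ℝ) (hL0 : 0 < L) (hL1 : L ≤ 1)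
    (hclose : ∀ j, ‖v j - mk2 (EuclideanSpace.single j 1) 0‖ ≤ L / (3 * Real.sqrt m)) :
    ∃ a : Fin m → EuclideanSpace ℝ (Fin k),
      E = Submodule.span ℝ (Set.range fun j => mk2 (EuclideanSpace.single j 1) (a j)) ∧
      Real.sqrt (∑ j, ‖a j‖ ^ 2) ≤ L := by
  classical
  set X : Matrix (Fin m) (Fin m) ℝ := fun j i => (v j).ofLp.1 i with hXdef
  set Y : Matrix (Fin m) (Fin k) ℝ := fun j i => (v j).ofLp.2 i with hYdef
  -- componentwise square bound
  have hsq : ∀ j : Fin m, ‖(v j).ofLp.1 - EuclideanSpace.single j 1‖ ^ 2 + ‖(v j).ofLp.2‖ ^ 2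
      ≤ L ^ 2 / (9 * m) := by
    intro j
    have hm : (0:ℝ) < m := by exact_mod_cast j.pos
    have hd : (0:ℝ) ≤ L / (3 * Real.sqrt m) := by positivity
    have h1 : ‖v j - mk2 (EuclideanSpace.single j 1) 0‖ ^ 2 ≤ (L / (3 * Real.sqrt m)) ^ 2 :=
      pow_le_pow_left₀ (norm_nonneg _) (hclose j) 2
    have h2 : (L / (3 * Real.sqrt m)) ^ 2 = L ^ 2 / (9 * m) := by
      rw [div_pow, mul_pow, Real.sq_sqrt hm.le]; norm_num
    have h3 : ‖v j - mk2 (EuclideanSpace.single j 1) 0‖ ^ 2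
        = ‖(v j).ofLp.1 - EuclideanSpace.single j 1‖ ^ 2 + ‖(v j).ofLp.2‖ ^ 2 := by
      have hf : WithLp.fst (v j - mk2 (EuclideanSpace.single j 1) 0)
          = (v j).ofLp.1 - EuclideanSpace.single j 1 := rfl
      have hs : WithLp.snd (v j - mk2 (EuclideanSpace.single j 1) 0) = (v j).ofLp.2 - 0 := rfl
      rw [WithLp.prod_norm_sq_eq_of_L2, hf, hs, sub_zero]
    rw [h3] at h1
    linarith [h1, h2]
  -- row-wise norms
  have hrow1 : ∀ j : Fin m, ∑ i, ((1 - X) j i) ^ 2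
      = ‖(v j).ofLp.1 - EuclideanSpace.single j 1‖ ^ 2 := by
    intro j
    rw [EuclideanSpace.norm_eq, Real.sq_sqrt (by positivity)]
    refine Finset.sum_congr rfl fun i _ => ?_
    have h4 : ((v j).ofLp.1 - EuclideanSpace.single j 1 : EuclideanSpace ℝ (Fin m)) i
        = X j i - (if i = j then 1 else 0) := by
      have : ((v j).ofLp.1 - EuclideanSpace.single j 1 : EuclideanSpace ℝ (Fin m)) i
          = (v j).ofLp.1 i - EuclideanSpace.single j 1 i := rfl
      rw [this, EuclideanSpace.single_apply, hXdef]
    rw [Matrix.sub_apply, Matrix.one_apply, h4, Real.norm_eq_abs, sq_abs]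
    rw [show (if j = i then (1:ℝ) else 0) = (if i = j then 1 else 0) from
      if_congr eq_comm rfl rfl]
    ring
  have hrow2 : ∀ j : Fin m, ∑ i, (Y j i) ^ 2 = ‖(v j).ofLp.2‖ ^ 2 := by
    intro j
    rw [EuclideanSpace.norm_eq, Real.sq_sqrt (by positivity)]
    refine Finset.sum_congr rfl fun i _ => ?_
    rw [Real.norm_eq_abs, sq_abs]
  have hmle : (m : ℝ) * (L ^ 2 / (9 * m)) ≤ (L / 3) ^ 2 := by
    rcases Nat.eq_zero_or_pos m with hm | hm
    · subst hm; simp; positivity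
    · have hm' : (0:ℝ) < m := by exact_mod_cast hm
      rw [div_pow]
      rw [mul_div_assoc']
      rw [div_le_div_iff₀ (by positivity) (by norm_num)]
      ring_nf
      nlinarith [sq_nonneg L]
  have hXb : ‖1 - X‖ ≤ L / 3 := by
    refine frob_le _ (by positivity) ?_
    calc ∑ j, ∑ i, ((1 - X) j i) ^ 2
        ≤ ∑ _j : Fin m, L ^ 2 / (9 * m) := by
          refine Finset.sum_le_sum fun j _ => ?_
          rw [hrow1 j]
          have := hsq j
          nlinarith [sq_nonneg ‖(v j).ofLp.2‖]
      _ = (m : ℝ) * (L ^ 2 / (9 * m)) := by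
          rw [Finset.sum_const, Finset.card_univ, Fintype.card_fin, nsmul_eq_mul]
      _ ≤ (L / 3) ^ 2 := hmle
  have hYb : ‖Y‖ ≤ L / 3 := by
    refine frob_le _ (by positivity) ?_
    calc ∑ j, ∑ i, (Y j i) ^ 2
        ≤ ∑ _j : Fin m, L ^ 2 / (9 * m) := by
          refine Finset.sum_le_sum fun j _ => ?_
          rw [hrow2 j]
          have := hsq j
          nlinarith [sq_nonneg ‖(v j).ofLp.1 - EuclideanSpace.single j 1‖]
      _ = (m : ℝ) * (L ^ 2 / (9 * m)) := by
          rw [Finset.sum_const, Finset.card_univ, Fintype.card_fin, nsmul_eq_mul]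
      _ ≤ (L / 3) ^ 2 := hmle
  -- X is invertible
  haveI : CompleteSpace (Matrix (Fin m) (Fin m) ℝ) := FiniteDimensional.complete ℝ _
  have hX1 : ‖1 - X‖ < 1 := lt_of_le_of_lt hXb (by linarith)
  have hXunit : IsUnit X := by
    have := (Units.oneSub (1 - X) hX1).isUnit
    simpa using this
  have hdet : IsUnit X.det := (Matrix.isUnit_iff_isUnit_det X).mp hXunit
  set A : Matrix (Fin m) (Fin k) ℝ := X⁻¹ * Y with hAdef
  have hXA : X * A = Y := by
    rw [hAdef, ← Matrix.mul_assoc, Matrix.mul_nonsing_inv _ hdet, Matrix.one_mul]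
  have hAb : ‖A‖ ≤ L / 2 := by
    have hA2 : A = Y + (1 - X) * A := by
      rw [Matrix.sub_mul, Matrix.one_mul, hXA]; abel
    have h5 : ‖A‖ ≤ ‖Y‖ + ‖1 - X‖ * ‖A‖ := by
      calc ‖A‖ = ‖Y + (1 - X) * A‖ := by rw [← hA2]
        _ ≤ ‖Y‖ + ‖(1 - X) * A‖ := norm_add_le _ _
        _ ≤ ‖Y‖ + ‖1 - X‖ * ‖A‖ := by
            have := Matrix.frobenius_norm_mul (1 - X) A
            linarith
    have h6 : ‖1 - X‖ * ‖A‖ ≤ (L / 3) * ‖A‖ :=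
      mul_le_mul_of_nonneg_right hXb (norm_nonneg A)
    have h7 : (L/3) * ‖A‖ ≤ (1/3) * ‖A‖ :=
      mul_le_mul_of_nonneg_right (by linarith) (norm_nonneg A)
    linarith [h5, h6, h7, norm_nonneg A]
  -- the vectors
  set a : Fin m → EuclideanSpace ℝ (Fin k) := fun j => (WithLp.equiv 2 _).symm (A j) with hadef
  set w : Fin m → ProdSp m k := fun j => mk2 (EuclideanSpace.single j 1) (a j) with hwdef
  have hXinv : X⁻¹ * X = 1 := Matrix.nonsing_inv_mul _ hdet
  have key1 : ∀ (j : Fin m) (i : Fin m),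
      (∑ p, (X⁻¹ j p) • v p).ofLp.1 i = ∑ p, X⁻¹ j p * X p i := by
    intro j i
    calc (∑ p, (X⁻¹ j p) • v p).ofLp.1 i
        = ((evalL m i).comp (fstL m k)) (∑ p, (X⁻¹ j p) • v p) := rfl
      _ = ∑ p, ((evalL m i).comp (fstL m k)) ((X⁻¹ j p) • v p) := map_sum _ _ _
      _ = ∑ p, X⁻¹ j p * X p i := by
          refine Finset.sum_congr rfl fun p _ => ?_
          rw [map_smul, smul_eq_mul]
          rfl
  have key2 : ∀ (j : Fin m) (i : Fin k),
      (∑ p, (X⁻¹ j p) • v p).ofLp.2 i = ∑ p, X⁻¹ j p * Y p i := by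
    intro j i
    calc (∑ p, (X⁻¹ j p) • v p).ofLp.2 i
        = ((evalL k i).comp (sndL m k)) (∑ p, (X⁻¹ j p) • v p) := rfl
      _ = ∑ p, ((evalL k i).comp (sndL m k)) ((X⁻¹ j p) • v p) := map_sum _ _ _
      _ = ∑ p, X⁻¹ j p * Y p i := by
          refine Finset.sum_congr rfl fun p _ => ?_
          rw [map_smul, smul_eq_mul]
          rfl
  have hw : ∀ j, w j = ∑ p, (X⁻¹ j p) • v p := by
    intro j
    refine WithLp.ofLp_injective _ (Prod.ext ?_ ?_)
    · show EuclideanSpace.single j 1 = (∑ p, (X⁻¹ j p) • v p).ofLp.1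
      ext i
      rw [key1 j i, ← Matrix.mul_apply, hXinv, EuclideanSpace.single_apply, Matrix.one_apply]
      exact if_congr eq_comm rfl rfl
    · show a j = (∑ p, (X⁻¹ j p) • v p).ofLp.2
      ext i
      rw [key2 j i, ← Matrix.mul_apply]
      rfl
  have hwE : ∀ j, w j ∈ E := by
    intro j
    rw [hw j]
    exact Submodule.sum_mem _ fun p _ => Submodule.smul_mem _ _ (hv p)
  have hle : Submodule.span ℝ (Set.range w) ≤ E := by
    rw [Submodule.span_le]
    rintro _ ⟨j, rfl⟩
    exact hwE j
  have hsingle : LinearIndependent ℝ (fun j : Fin m => EuclideanSpace.single j (1:ℝ)) := by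
    have h9 : ⇑(EuclideanSpace.basisFun (Fin m) ℝ).toBasis
        = fun j => EuclideanSpace.single j (1:ℝ) := by
      funext j
      simp [EuclideanSpace.basisFun_apply]
    have := (EuclideanSpace.basisFun (Fin m) ℝ).toBasis.linearIndependent
    rwa [h9] at this
  have hli : LinearIndependent ℝ w := by
    refine LinearIndependent.of_comp (fstL m k) ?_
    have h10 : ⇑(fstL m k) ∘ w = fun j => EuclideanSpace.single j (1:ℝ) := rfl
    rw [h10]
    exact hsingle
  have hcard := finrank_span_eq_card hli
  have hEq : Submodule.span ℝ (Set.range w) = E :=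
    Submodule.eq_of_le_of_finrank_eq hle (by rw [hcard, Fintype.card_fin, hE])
  refine ⟨a, hEq.symm, ?_⟩
  have h11 : ∑ j, ‖a j‖ ^ 2 = ∑ j, ∑ i, (A j i) ^ 2 := by
    refine Finset.sum_congr rfl fun j _ => ?_
    rw [EuclideanSpace.norm_eq, Real.sq_sqrt (by positivity)]
    refine Finset.sum_congr rfl fun i _ => ?_
    rw [Real.norm_eq_abs, sq_abs]
    rfl
  rw [h11, ← frob_eq]
  linarith [hAb]

end FrobAux
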